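/- (Crossing lemma, two-soliton vector case.) Let K be a real 1×m matrix (so n = 1), ξ₁, ξ₂ ∈ ℝ^m, η₁, η₂ nonzero real numbers, and p₁,p₂,q₁,q₂ real numbers with p₁≠q₁, p₂≠q₂, q₁≠p₂, q₂≠p₁. Set κ_{ij} = η_i (K ξ_j) (a scalar), assume κ_{11}, κ_{22} ≠ 0 and α := 1 − ((q₁−p₁)(q₂−p₂)κ_{12}κ_{21})/((q₁−p₂)(q₂−p₁)κ_{11}κ_{22}) ≠ 0. Define the vectors φ_{11} = ((q₁−p₁)(q₂−p₂)/(α κ_{11} κ_{22})) ( (κ_{22}/(p₂−q₂)) η₁ ξ₁ + (κ_{11}/(p₁−q₁)) η₂ ξ₂ + (κ_{12}/(q₁−p₂)) η₂ ξ₁ + (κ_{21}/(q₂−p₁)) η₁ ξ₂ ), φ_{12} = (p₁−q₁) η₁ ξ₁/κ_{11}, φ_{21} = (p₂−q₂) η₂ ξ₂/κ_{22}, φ_{22} = 0 ∈ ℝ^m. Then (p₁−p₂) φ_{11} + (q₁−q₂) φ_{22} = (p₁−q₂) φ_{12} + (q₁−p₂) φ_{21}. -/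

import Mathlib

open Matrix

/-- Crossing lemma for the two-soliton vector case (`n = 1`):
`(p₁−p₂) φ₁₁ + (q₁−q₂) φ₂₂ = (p₁−q₂) φ₁₂ + (q₁−p₂) φ₂₁`. -/
theorem stmt_14 {m : ℕ} (K : Fin m → ℝ) (ξ₁ ξ₂ : Fin m → ℝ) (η₁ η₂ : ℝ)
    (hη₁ : η₁ ≠ 0) (hη₂ : η₂ ≠ 0)
    (p₁ p₂ q₁ q₂ : ℝ)
    (h1 : p₁ ≠ q₁) (h2 : p₂ ≠ q₂) (h3 : q₁ ≠ p₂) (h4 : q₂ ≠ p₁)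
    (κ₁₁ κ₁₂ κ₂₁ κ₂₂ : ℝ)
    (hκ₁₁ : κ₁₁ = η₁ * (K ⬝ᵥ ξ₁)) (hκ₁₂ : κ₁₂ = η₁ * (K ⬝ᵥ ξ₂))
    (hκ₂₁ : κ₂₁ = η₂ * (K ⬝ᵥ ξ₁)) (hκ₂₂ : κ₂₂ = η₂ * (K ⬝ᵥ ξ₂))
    (hκ11 : κ₁₁ ≠ 0) (hκ22 : κ₂₂ ≠ 0)
    (α : ℝ)
    (hα : α = 1 - ((q₁ - p₁) * (q₂ - p₂) * κ₁₂ * κ₂₁)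
      / ((q₁ - p₂) * (q₂ - p₁) * κ₁₁ * κ₂₂))
    (hα0 : α ≠ 0)
    (φ₁₁ φ₁₂ φ₂₁ φ₂₂ : Fin m → ℝ)
    (hφ₁₁ : φ₁₁ = ((q₁ - p₁) * (q₂ - p₂) / (α * κ₁₁ * κ₂₂)) •
      ((κ₂₂ / (p₂ - q₂)) • (η₁ • ξ₁) + (κ₁₁ / (p₁ - q₁)) • (η₂ • ξ₂)
        + (κ₁₂ / (q₁ - p₂)) • (η₂ • ξ₁) + (κ₂₁ / (q₂ - p₁)) • (η₁ • ξ₂)))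
    (hφ₁₂ : φ₁₂ = ((p₁ - q₁) / κ₁₁) • (η₁ • ξ₁))
    (hφ₂₁ : φ₂₁ = ((p₂ - q₂) / κ₂₂) • (η₂ • ξ₂))
    (hφ₂₂ : φ₂₂ = 0) :
    (p₁ - p₂) • φ₁₁ + (q₁ - q₂) • φ₂₂ = (p₁ - q₂) • φ₁₂ + (q₁ - p₂) • φ₂₁ := by
  have d1 : p₁ - q₁ ≠ 0 := sub_ne_zero.mpr h1
  have d2 : p₂ - q₂ ≠ 0 := sub_ne_zero.mpr h2
  have d3 : q₁ - p₂ ≠ 0 := sub_ne_zero.mpr h3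
  have d4 : q₂ - p₁ ≠ 0 := sub_ne_zero.mpr h4
  subst hφ₁₁ hφ₁₂ hφ₂₁ hφ₂₂ hκ₁₁ hκ₁₂ hκ₂₁ hκ₂₂
  have hden : (q₁ - p₂) * (q₂ - p₁) * (η₁ * (K ⬝ᵥ ξ₁)) * (η₂ * (K ⬝ᵥ ξ₂))
      - (q₁ - p₁) * (q₂ - p₂) * (η₁ * (K ⬝ᵥ ξ₂)) * (η₂ * (K ⬝ᵥ ξ₁)) ≠ 0 := by
    intro h
    apply hα0
    rw [hα]
    have hd : (q₁ - p₂) * (q₂ - p₁) * (η₁ * (K ⬝ᵥ ξ₁)) * (η₂ * (K ⬝ᵥ ξ₂)) ≠ 0 := by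
      intro h'
      rcases mul_eq_zero.1 h' with h'' | h''
      · rcases mul_eq_zero.1 h'' with h3' | h3'
        · rcases mul_eq_zero.1 h3' with h4' | h4'
          · exact d3 h4'
          · exact d4 h4'
        · exact hκ11 h3'
      · exact hκ22 h''
    rw [sub_eq_zero, eq_comm, div_eq_one_iff_eq hd]
    linarith [sub_eq_zero.mp h]
  subst hα
  funext i
  simp only [Pi.add_apply, Pi.smul_apply, Pi.zero_apply, smul_eq_mul, mul_zero, add_zero]
  have hα0' : (1:ℝ) - (q₁ - p₁) * (q₂ - p₂) * (η₁ * (K ⬝ᵥ ξ₂)) * (η₂ * (K ⬝ᵥ ξ₁))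
      / ((q₁ - p₂) * (q₂ - p₁) * (η₁ * (K ⬝ᵥ ξ₁)) * (η₂ * (K ⬝ᵥ ξ₂))) ≠ 0 := hα0
  have k1 : K ⬝ᵥ ξ₁ ≠ 0 := right_ne_zero_of_mul hκ11
  have k2 : K ⬝ᵥ ξ₂ ≠ 0 := right_ne_zero_of_mul hκ22
  have k3 : (q₁ - p₂) * (q₂ - p₁) - (q₁ - p₁) * (q₂ - p₂) ≠ 0 := by
    intro h; apply hden; linear_combination (η₁ * K ⬝ᵥ ξ₁ * (η₂ * K ⬝ᵥ ξ₂)) * h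
  rw [one_sub_div (mul_ne_zero (mul_ne_zero (mul_ne_zero d3 d4) hκ11) hκ22)]
  field_simp
  ring
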